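/- The multiplicity of (1+q) as a factor of the Gaussian binomial coefficient [k+j choose k]_q is ⌊(k+j)/2⌋ − ⌊k/2⌋ − ⌊j/2⌋. In particular, the Gaussian binomial [k+j choose k]_q evaluated at q = −1 is nonzero if and only if k and j are not both odd. -/

import Mathlib

open Polynomial

/-- The number of integer partitions of `n` with at most `k` parts, each at most `j`. -/
noncomputable def pFit (k j n : ℕ) : ℕ :=
  Nat.card {μ : YoungDiagram // μ.card = n ∧ ∀ c ∈ μ.cells, c.1 < k ∧ c.2 < j}

/-- The Gaussian binomial coefficient `[k+j choose k]_q` as a polynomial in `q`,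
namely the generating function `∑_n p(k,j,n) q^n`. -/
noncomputable def gaussBinom (k j : ℕ) : Polynomial ℤ :=
  ∑ n ∈ Finset.range (k * j + 1), Polynomial.C (pFit k j n : ℤ) * Polynomial.X ^ n

/-! ### Finiteness and basic values of `pFit` -/

lemma cells_subset' {k j : ℕ} {μ : YoungDiagram} (h : ∀ c ∈ μ.cells, c.1 < k ∧ c.2 < j) :
    μ.cells ⊆ Finset.range k ×ˢ Finset.range j := by
  intro c hc
  simp only [Finset.mem_product, Finset.mem_range]
  exact h c hc

instance pFitFinite (k j n : ℕ) :
    Finite {μ : YoungDiagram // μ.card = n ∧ ∀ c ∈ μ.cells, c.1 < k ∧ c.2 < j} := by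
  apply Finite.of_injective
    (fun μ => (⟨μ.1.cells, Finset.mem_powerset.2 (cells_subset' μ.2.2)⟩ :
      ((Finset.range k ×ˢ Finset.range j).powerset : Finset (Finset (ℕ × ℕ)))))
  intro a b hab
  ext1
  ext1
  simpa [YoungDiagram.mem_cells] using congrArg (fun s => s.1) hab

lemma eq_bot_of_card_eq_zero {μ : YoungDiagram} (h : μ.card = 0) : μ = ⊥ := by
  have : μ.cells = ∅ := Finset.card_eq_zero.1 h
  ext c
  rw [this, YoungDiagram.cells_bot]

lemma pFit_zero (k j : ℕ) : pFit k j 0 = 1 := by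
  rw [pFit, Nat.card_eq_one_iff_unique]
  refine ⟨⟨fun a b => ?_⟩, ⟨⟨⊥, by simp⟩⟩⟩
  obtain ⟨a, ha, -⟩ := a
  obtain ⟨b, hb, -⟩ := b
  simp only [Subtype.mk.injEq]
  rw [eq_bot_of_card_eq_zero ha, eq_bot_of_card_eq_zero hb]

lemma card_le_of_box {k j : ℕ} {μ : YoungDiagram} (h : ∀ c ∈ μ.cells, c.1 < k ∧ c.2 < j) :
    μ.card ≤ k * j := by
  have := Finset.card_le_card (cells_subset' h)
  simpa [Finset.card_product] using this

lemma pFit_eq_zero {k j n : ℕ} (h : k * j < n) : pFit k j n = 0 := by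
  rw [pFit, Nat.card_eq_zero]
  left
  refine ⟨fun x => ?_⟩
  obtain ⟨μ, hn, hbox⟩ := x
  exact absurd (hn ▸ card_le_of_box hbox) (by omega)

lemma pFit_zero_left (j n : ℕ) : pFit 0 j n = if n = 0 then 1 else 0 := by
  split
  · subst ‹n = 0›; exact pFit_zero 0 j
  · exact pFit_eq_zero (by omega)

lemma pFit_zero_right (k n : ℕ) : pFit k 0 n = if n = 0 then 1 else 0 := by
  split
  · subst ‹n = 0›; exact pFit_zero k 0
  · exact pFit_eq_zero (by omega)

lemma gaussBinom_coeff (k j n : ℕ) : (gaussBinom k j).coeff n = pFit k j n := by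
  rw [gaussBinom, Polynomial.finset_sum_coeff]
  simp only [Polynomial.coeff_C_mul, Polynomial.coeff_X_pow, mul_ite, mul_one, mul_zero]
  rw [Finset.sum_ite_eq]
  split
  · rfl
  · rw [pFit_eq_zero (by simpa using ‹¬ n ∈ Finset.range (k*j+1)›)]
    simp

/-! ### Column shift maps -/

/-- Remove the first column of a Young diagram. -/
def shiftDown (μ : YoungDiagram) : YoungDiagram where
  cells := (μ.cells.filter (fun c => 0 < c.2)).image (fun c => (c.1, c.2 - 1))
  isLowerSet := by
    rintro ⟨a1, a2⟩ ⟨b1, b2⟩ hba ha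
    simp only [Finset.coe_image, Finset.coe_filter, Set.mem_image, Set.mem_setOf_eq,
      YoungDiagram.mem_cells] at ha ⊢
    obtain ⟨⟨c1, c2⟩, ⟨hc, hc2⟩, heq⟩ := ha
    obtain ⟨h1, h2⟩ := Prod.mk.injEq .. ▸ heq
    refine ⟨(b1, b2 + 1), ⟨μ.up_left_mem ?_ ?_ hc, by omega⟩, by simp⟩
    · exact le_trans hba.1 (by omega)
    · have := hba.2; omega

lemma mem_shiftDown (μ : YoungDiagram) (c : ℕ × ℕ) :
    c ∈ shiftDown μ ↔ (c.1, c.2 + 1) ∈ μ := by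
  obtain ⟨c1, c2⟩ := c
  show (c1, c2) ∈ (μ.cells.filter (fun c => 0 < c.2)).image (fun c => (c.1, c.2 - 1)) ↔ _
  simp only [shiftDown, YoungDiagram.mem_mk, Finset.mem_image, Finset.mem_filter,
    YoungDiagram.mem_cells]
  constructor
  · rintro ⟨⟨a1, a2⟩, ⟨ha, ha2⟩, heq⟩
    obtain ⟨h1, h2⟩ := Prod.mk.injEq .. ▸ heq
    have : a2 = c2 + 1 := by omega
    subst h1; rw [← this]; exact ha
  · intro h
    exact ⟨(c1, c2 + 1), ⟨h, by omega⟩, by simp⟩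

/-- Add a first column of height `k+1` to a Young diagram with at most `k+1` rows. -/
def shiftUp (k : ℕ) (ν : YoungDiagram) (hν : ∀ c ∈ ν.cells, c.1 < k + 1) : YoungDiagram where
  cells := (ν.cells.image (fun c => (c.1, c.2 + 1))) ∪ (Finset.range (k+1) ×ˢ {0})
  isLowerSet := by
    rintro ⟨a1, a2⟩ ⟨b1, b2⟩ hba ha
    have h1 : b1 ≤ a1 := hba.1
    have h2 : b2 ≤ a2 := hba.2
    simp only [Finset.coe_union, Finset.coe_image, Set.mem_union, Set.mem_image,
      Finset.mem_coe, YoungDiagram.mem_cells, Finset.coe_product, Set.mem_prod,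
      Finset.coe_range, Set.mem_Iio, Finset.coe_singleton, Set.mem_singleton_iff] at ha ⊢
    rcases ha with ⟨⟨c1, c2⟩, hc, heq⟩ | ⟨ha1, ha2⟩
    · obtain ⟨e1, e2⟩ := Prod.mk.injEq .. ▸ heq
      rcases Nat.eq_zero_or_pos b2 with hb | hb
      · right
        subst e1
        exact ⟨lt_of_le_of_lt h1 (hν _ hc), hb⟩
      · left
        refine ⟨(b1, b2 - 1), ν.up_left_mem (by omega) (by omega) hc, by simp; omega⟩
    · right
      exact ⟨by omega, by omega⟩

lemma mem_shiftUp (k : ℕ) (ν : YoungDiagram) (hν : ∀ c ∈ ν.cells, c.1 < k + 1) (c : ℕ × ℕ) :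
    c ∈ shiftUp k ν hν ↔ (c.2 = 0 ∧ c.1 < k + 1) ∨ (0 < c.2 ∧ (c.1, c.2 - 1) ∈ ν) := by
  obtain ⟨c1, c2⟩ := c
  show (c1, c2) ∈ (ν.cells.image (fun c => (c.1, c.2 + 1))) ∪ (Finset.range (k+1) ×ˢ {0}) ↔ _
  simp only [shiftUp, YoungDiagram.mem_mk, Finset.mem_union, Finset.mem_image,
    YoungDiagram.mem_cells, Finset.mem_product, Finset.mem_range, Finset.mem_singleton]
  constructor
  · rintro (⟨⟨a1, a2⟩, ha, heq⟩ | ⟨h1, h2⟩)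
    · obtain ⟨e1, e2⟩ := Prod.mk.injEq .. ▸ heq
      right
      subst e1
      refine ⟨by omega, ?_⟩
      have : c2 - 1 = a2 := by omega
      simpa [this] using ha
    · left; exact ⟨h2, h1⟩
  · rintro (⟨h0, h1⟩ | ⟨h0, h1⟩)
    · right; exact ⟨h1, h0⟩
    · left; exact ⟨(c1, c2 - 1), h1, by simp; omega⟩

lemma shiftDown_card (μ : YoungDiagram) : (shiftDown μ).card + μ.colLen 0 = μ.card := by
  show ((μ.cells.filter (fun c => 0 < c.2)).image (fun c : ℕ × ℕ => (c.1, c.2 - 1))).card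
      + μ.colLen 0 = μ.card
  rw [Finset.card_image_of_injOn, YoungDiagram.colLen_eq_card]
  · have hcol : μ.col 0 = μ.cells.filter (fun c => ¬ 0 < c.2) := by
      rw [YoungDiagram.col]
      apply Finset.filter_congr
      intro c _
      constructor
      · intro h; omega
      · intro h; omega
    rw [hcol]
    exact Finset.card_filter_add_card_filter_not (p := fun c : ℕ × ℕ => 0 < c.2)
  · rintro ⟨a1, a2⟩ ha ⟨b1, b2⟩ hb heq
    simp only [Finset.mem_coe, Finset.mem_filter] at ha hb
    obtain ⟨e1, e2⟩ := Prod.mk.injEq .. ▸ heq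
    simp only [Prod.mk.injEq]
    omega

lemma shiftUp_card (k : ℕ) (ν : YoungDiagram) (hν : ∀ c ∈ ν.cells, c.1 < k + 1) :
    (shiftUp k ν hν).card = ν.card + (k + 1) := by
  show ((ν.cells.image (fun c : ℕ × ℕ => (c.1, c.2 + 1))) ∪ (Finset.range (k+1) ×ˢ {0})).card
      = ν.card + (k + 1)
  rw [Finset.card_union_of_disjoint, Finset.card_image_of_injective, Finset.card_product]
  · simp
  · rintro ⟨a1, a2⟩ ⟨b1, b2⟩ heq
    obtain ⟨e1, e2⟩ := Prod.mk.injEq .. ▸ heq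
    simp only [Prod.mk.injEq]
    omega
  · rw [Finset.disjoint_left]
    rintro ⟨a1, a2⟩ ha hb
    simp only [Finset.mem_image] at ha
    simp only [Finset.mem_product, Finset.mem_singleton] at hb
    obtain ⟨c, _, heq⟩ := ha
    obtain ⟨e1, e2⟩ := Prod.mk.injEq .. ▸ heq
    omega

lemma colLen_zero_eq (k j : ℕ) (μ : YoungDiagram) (hbox : ∀ c ∈ μ.cells, c.1 < k + 1 ∧ c.2 < j)
    (hmem : (k, 0) ∈ μ) : μ.colLen 0 = k + 1 := by
  have h1 : k < μ.colLen 0 := YoungDiagram.mem_iff_lt_colLen.1 hmem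
  have h2 : ¬ (k + 1, 0) ∈ μ := fun h => by
    have := (hbox _ ((YoungDiagram.mem_cells _).2 h)).1; omega
  rw [YoungDiagram.mem_iff_lt_colLen] at h2
  omega

lemma shiftUp_shiftDown (k j : ℕ) (μ : YoungDiagram)
    (hbox : ∀ c ∈ μ.cells, c.1 < k + 1 ∧ c.2 < j + 1) (hmem : (k, 0) ∈ μ)
    (h' : ∀ c ∈ (shiftDown μ).cells, c.1 < k + 1) :
    shiftUp k (shiftDown μ) h' = μ := by
  ext ⟨c1, c2⟩
  simp only [YoungDiagram.mem_cells] at *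
  rw [mem_shiftUp, mem_shiftDown]
  constructor
  · rintro (⟨h0, h1⟩ | ⟨h0, h1⟩)
    · subst h0
      exact μ.up_left_mem (by omega) le_rfl hmem
    · have he : (c1, c2 - 1).2 + 1 = c2 := by simp; omega
      rw [show ((c1, c2 - 1).1, (c1, c2 - 1).2 + 1) = (c1, c2) by rw [he]] at h1
      exact h1
  · intro h
    rcases Nat.eq_zero_or_pos c2 with h0 | h0
    · left
      subst h0
      exact ⟨rfl, (hbox (c1, 0) ((YoungDiagram.mem_cells _).2 h)).1⟩
    · right
      refine ⟨h0, ?_⟩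
      rw [show ((c1, c2 - 1).1, (c1, c2 - 1).2 + 1) = (c1, c2) by simp; omega]
      exact h

lemma shiftDown_shiftUp (k : ℕ) (ν : YoungDiagram) (h' : ∀ c ∈ ν.cells, c.1 < k + 1) :
    shiftDown (shiftUp k ν h') = ν := by
  ext ⟨c1, c2⟩
  simp only [YoungDiagram.mem_cells]
  rw [mem_shiftDown, mem_shiftUp]
  constructor
  · rintro (⟨h0, h1⟩ | ⟨h0, h1⟩)
    · simp at h0
    · simpa using h1
  · intro h
    right
    exact ⟨by simp, by simpa using h⟩

/-! ### The recursion -/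

lemma pFit_rec (k j n : ℕ) :
    pFit (k+1) (j+1) n =
      pFit k (j+1) n + (if k + 1 ≤ n then pFit (k+1) j (n - (k+1)) else 0) := by
  classical
  rw [pFit]
  rw [Nat.card_congr (Equiv.sumCompl
    (fun μ : {μ : YoungDiagram // μ.card = n ∧ ∀ c ∈ μ.cells, c.1 < k+1 ∧ c.2 < j+1} =>
      (k, 0) ∈ μ.1)).symm]
  rw [Nat.card_sum, add_comm]
  congr 1
  · -- partitions not meeting cell (k,0) fit in a k × (j+1) box
    rw [Nat.card_congr (α := {a : {μ : YoungDiagram // μ.card = n ∧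
        ∀ c ∈ μ.cells, c.1 < k+1 ∧ c.2 < j+1} // ¬ (k, 0) ∈ a.1})
      (β := {μ : YoungDiagram // μ.card = n ∧ ∀ c ∈ μ.cells, c.1 < k ∧ c.2 < j+1})
      ⟨fun a => ⟨a.1.1, a.1.2.1, fun c hc => ⟨by
          by_contra hlt
          exact a.2 (a.1.1.up_left_mem (by omega) (Nat.zero_le _)
            ((YoungDiagram.mem_cells _).1 hc)), (a.1.2.2 c hc).2⟩⟩,
        fun b => ⟨⟨b.1, b.2.1, fun c hc => ⟨by have := (b.2.2 c hc).1; omega, (b.2.2 c hc).2⟩⟩,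
          fun hmem => by
            have := (b.2.2 (k, 0) ((YoungDiagram.mem_cells _).2 hmem)).1; omega⟩,
        fun a => by ext1; ext1; rfl, fun b => by ext1; rfl⟩]
    rfl
  · -- partitions containing cell (k,0): remove the first column
    have hE : {a : {μ : YoungDiagram // μ.card = n ∧
        ∀ c ∈ μ.cells, c.1 < k+1 ∧ c.2 < j+1} // (k, 0) ∈ a.1} ≃
        {ν : YoungDiagram // ν.card + (k+1) = n ∧ ∀ c ∈ ν.cells, c.1 < k+1 ∧ c.2 < j} := by
      refine ⟨fun a => ⟨shiftDown a.1.1, ?_, ?_⟩, fun b => ⟨⟨shiftUp k b.1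
          (fun c hc => (b.2.2 c hc).1), ?_, ?_⟩, ?_⟩, ?_, ?_⟩
      · have h1 := shiftDown_card a.1.1
        have h2 := colLen_zero_eq k (j+1) a.1.1 a.1.2.2 a.2
        have h3 := a.1.2.1
        omega
      · intro c hc
        have h1 := (mem_shiftDown a.1.1 c).1 ((YoungDiagram.mem_cells _).1 hc)
        have h2 := a.1.2.2 _ ((YoungDiagram.mem_cells _).2 h1)
        simp only at h2
        exact ⟨h2.1, by omega⟩
      · rw [shiftUp_card, b.2.1]
      · intro c hc
        have h1 := (mem_shiftUp k b.1 _ c).1 ((YoungDiagram.mem_cells _).1 hc)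
        rcases h1 with ⟨h0, h1⟩ | ⟨h0, h1⟩
        · exact ⟨h1, by omega⟩
        · have h2 := b.2.2 _ ((YoungDiagram.mem_cells _).2 h1)
          simp only at h2
          exact ⟨h2.1, by omega⟩
      · exact (mem_shiftUp k b.1 (fun c hc => (b.2.2 c hc).1) (k, 0)).2 (Or.inl ⟨rfl, by omega⟩)
      · intro a
        ext1
        ext1
        exact shiftUp_shiftDown k j a.1.1 a.1.2.2 a.2 (fun c hc => by
          have h1 := (mem_shiftDown a.1.1 c).1 ((YoungDiagram.mem_cells _).1 hc)
          exact (a.1.2.2 _ ((YoungDiagram.mem_cells _).2 h1)).1)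
      · intro b
        ext1
        exact shiftDown_shiftUp k b.1 (fun c hc => (b.2.2 c hc).1)
    rw [Nat.card_congr hE]
    split
    · rw [pFit, Nat.card_congr (Equiv.subtypeEquivRight (q := fun ν : YoungDiagram =>
        ν.card = n - (k+1) ∧ ∀ c ∈ ν.cells, c.1 < k+1 ∧ c.2 < j)
        (fun ν => by constructor
                     · rintro ⟨h1, h2⟩; exact ⟨by omega, h2⟩
                     · rintro ⟨h1, h2⟩; exact ⟨by omega, h2⟩))]
    · rw [Nat.card_eq_zero]
      left
      refine ⟨fun x => ?_⟩
      obtain ⟨ν, hν, -⟩ := x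
      omega

/-! ### Polynomial recursion and product formula -/

lemma gaussBinom_rec (k j : ℕ) :
    gaussBinom (k+1) (j+1) = gaussBinom k (j+1) + X^(k+1) * gaussBinom (k+1) j := by
  ext n
  rw [Polynomial.coeff_add, gaussBinom_coeff, gaussBinom_coeff,
    mul_comm ((X : Polynomial ℤ)^(k+1)), Polynomial.coeff_mul_X_pow', gaussBinom_coeff,
    pFit_rec k j n]
  push_cast
  split
  · simp
  · simp

noncomputable def Dpoly (k j : ℕ) : Polynomial ℤ :=
  ∏ i ∈ Finset.range k, (1 - X ^ (j + i + 1))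

lemma gaussBinom_zero_left (j : ℕ) : gaussBinom 0 j = 1 := by
  rw [gaussBinom]
  simp [pFit_zero]

lemma gaussBinom_zero_right (k : ℕ) : gaussBinom k 0 = 1 := by
  rw [gaussBinom]
  simp [pFit_zero]

lemma gaussBinom_mul_D : ∀ (m k j : ℕ), k + j = m → gaussBinom k j * Dpoly k 0 = Dpoly k j := by
  intro m
  induction m using Nat.strong_induction_on with
  | _ m ih =>
    intro k j hm
    match k, j with
    | 0, j => simp [gaussBinom_zero_left, Dpoly]
    | k+1, 0 => simp [gaussBinom_zero_right]
    | k+1, j+1 =>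
      have hD : Dpoly (k+1) 0 = Dpoly k 0 * (1 - X^(k+1)) := by
        rw [Dpoly, Dpoly, Finset.prod_range_succ]
        norm_num
      have hP1 : Dpoly (k+1) (j+1) = Dpoly k (j+1) * (1 - X^(j+1+k+1)) := by
        rw [Dpoly, Dpoly, Finset.prod_range_succ]
      have hP2 : Dpoly (k+1) j = (1 - X^(j+1)) * Dpoly k (j+1) := by
        rw [Dpoly, Dpoly, Finset.prod_range_succ', mul_comm]
        congr 1
        · apply Finset.prod_congr rfl
          intro i _
          have h : j + (i+1) + 1 = j + 1 + i + 1 := by omega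
          rw [h]
      rw [gaussBinom_rec k j, add_mul, hD, ← mul_assoc,
        ih (k + (j+1)) (by omega) k (j+1) rfl, mul_assoc (X^(k+1)),
        ← hD, ih ((k+1) + j) (by omega) (k+1) j rfl, hP1, hP2]
      ring

/-! ### Root multiplicities at `-1` -/

lemma one_sub_X_pow_ne_zero (m : ℕ) : (1 - X ^ (m+1) : Polynomial ℤ) ≠ 0 := fun h => by
  have := congrArg (Polynomial.eval 0) h
  simp at this

lemma rootMult_one_sub (m : ℕ) :
    (1 - X ^ (m+1) : Polynomial ℤ).rootMultiplicity (-1) = if (m+1) % 2 = 0 then 1 else 0 := by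
  by_cases h : (m+1) % 2 = 0
  · rw [if_pos h]
    have key : (1 - X ^ (m+1) : Polynomial ℤ)
        = (∑ i ∈ Finset.range (m+1), (-X)^i) * (X - C (-1)) := by
      have hgs := geom_sum_mul (-X : Polynomial ℤ) (m+1)
      have h2 : ((-X : Polynomial ℤ))^(m+1) = X^(m+1) :=
        Even.neg_pow (Nat.even_iff.2 h) X
      have h3 : (X - C (-1) : Polynomial ℤ) = -(-X - 1) := by
        rw [map_neg, map_one]; ring
      rw [h3, mul_neg, hgs, h2]
      ring
    rw [key, rootMultiplicity_mul (by rw [← key]; exact one_sub_X_pow_ne_zero m),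
      rootMultiplicity_X_sub_C_self]
    have : ((∑ i ∈ Finset.range (m+1), (-X)^i : Polynomial ℤ)).rootMultiplicity (-1) = 0 := by
      apply rootMultiplicity_eq_zero
      simp only [IsRoot, Polynomial.eval_finset_sum, Polynomial.eval_pow, Polynomial.eval_neg,
        Polynomial.eval_X]
      simp only [neg_neg, one_pow, Finset.sum_const, Finset.card_range, nsmul_eq_mul, mul_one]
      exact_mod_cast Nat.succ_ne_zero m
    rw [this]
  · rw [if_neg h]
    apply rootMultiplicity_eq_zero
    simp only [IsRoot, Polynomial.eval_sub, Polynomial.eval_one, Polynomial.eval_pow,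
      Polynomial.eval_neg, Polynomial.eval_X]
    rw [Odd.neg_one_pow (Nat.odd_iff.2 (by omega))]
    norm_num

lemma Dpoly_ne_zero (k j : ℕ) : Dpoly k j ≠ 0 :=
  Finset.prod_ne_zero_iff.2 fun _ _ => one_sub_X_pow_ne_zero _

lemma rootMult_Dpoly (k j : ℕ) : (Dpoly k j).rootMultiplicity (-1) = (j+k)/2 - j/2 := by
  induction k with
  | zero =>
    simp only [Dpoly, Finset.range_zero, Finset.prod_empty]
    rw [rootMultiplicity_eq_zero (by simp [IsRoot])]
    omega
  | succ k ih =>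
    have hsplit : Dpoly (k+1) j = Dpoly k j * (1 - X^(j+k+1)) := by
      rw [Dpoly, Dpoly, Finset.prod_range_succ]
    rw [hsplit, rootMultiplicity_mul
      (mul_ne_zero (Dpoly_ne_zero k j) (one_sub_X_pow_ne_zero (j+k))), ih,
      rootMult_one_sub (j+k)]
    split
    · omega
    · next hcond => omega

lemma gaussBinom_ne_zero (k j : ℕ) : gaussBinom k j ≠ 0 := fun h => by
  have h0 := gaussBinom_coeff k j 0
  rw [h] at h0
  simp [pFit_zero] at h0

lemma rootMult_gauss (k j : ℕ) :
    (gaussBinom k j).rootMultiplicity (-1) = (k+j)/2 - k/2 - j/2 := by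
  have h := congrArg (rootMultiplicity (-1)) (gaussBinom_mul_D (k+j) k j rfl)
  rw [rootMultiplicity_mul (mul_ne_zero (gaussBinom_ne_zero k j) (Dpoly_ne_zero k 0)),
    rootMult_Dpoly, rootMult_Dpoly] at h
  omega

/-- The multiplicity of `(1+q)` in `[k+j choose k]_q` is `⌊(k+j)/2⌋ − ⌊k/2⌋ − ⌊j/2⌋`;
in particular `[k+j choose k]_{q=−1} ≠ 0` iff `k` and `j` are not both odd. -/
theorem stmt17 (k j : ℕ) :
    (gaussBinom k j).rootMultiplicity (-1) = (k + j) / 2 - k / 2 - j / 2 ∧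
    ((gaussBinom k j).eval (-1) ≠ 0 ↔ ¬ (Odd k ∧ Odd j)) := by
  have hm := rootMult_gauss k j
  refine ⟨hm, ?_⟩
  have hpos := rootMultiplicity_pos (gaussBinom_ne_zero k j) (x := (-1 : ℤ))
  rw [hm] at hpos
  constructor
  · rintro hne ⟨hk, hj⟩
    rw [Nat.odd_iff] at hk hj
    exact hne (hpos.1 (by omega))
  · intro hno heval
    have hroot : Polynomial.IsRoot (gaussBinom k j) (-1) := heval
    have := hpos.2 hroot
    exact hno ⟨Nat.odd_iff.2 (by omega), Nat.odd_iff.2 (by omega)⟩
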